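/- Let I ⊂ ℝ be a nonempty open interval and let f : I → ℝ be one of the functions f(t) = cosh t, f(t) = e^t, or f(t) = sinh t (with I ⊂ (0,∞) in the last case). Then there exist no continuously differentiable function θ : I → ℝ and constants C₁, C₂ ∈ ℝ such that 6f′(t) = C₁ sin θ(t) − C₂ cos θ(t) and f(t)θ′(t) = C₁ cos θ(t) + C₂ sin θ(t) for all t ∈ I. -/

import Mathlib

private lemma aux_key (I : Set ℝ) (hI_open : IsOpen I) (f : ℝ → ℝ)
    (hf'' : ∀ t, HasDerivAt (deriv f) (f t) t)
    (θ : ℝ → ℝ) (C₁ C₂ : ℝ) (hθ : ContDiffOn ℝ 1 θ I)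
    (h1 : ∀ t ∈ I, 6 * deriv f t = C₁ * Real.sin (θ t) - C₂ * Real.cos (θ t))
    (h2 : ∀ t ∈ I, f t * deriv θ t = C₁ * Real.cos (θ t) + C₂ * Real.sin (θ t)) :
    ∀ t ∈ I, 36 * (deriv f t)^2 + 6 * (f t)^2 = C₁^2 + C₂^2 := by
  intro t ht
  have hmem : I ∈ nhds t := hI_open.mem_nhds ht
  have hθd : DifferentiableOn ℝ θ I := hθ.differentiableOn one_ne_zero
  have hθt : HasDerivAt θ (deriv θ t) t := (hθd.differentiableAt hmem).hasDerivAt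
  have h_rhs : HasDerivAt (fun s => C₁ * Real.sin (θ s) - C₂ * Real.cos (θ s))
      (C₁ * (Real.cos (θ t) * deriv θ t) - C₂ * (-Real.sin (θ t) * deriv θ t)) t :=
    (hθt.sin.const_mul C₁).sub (hθt.cos.const_mul C₂)
  have hEq : (fun s => 6 * deriv f s) =ᶠ[nhds t]
      (fun s => C₁ * Real.sin (θ s) - C₂ * Real.cos (θ s)) :=
    Filter.eventually_of_mem hmem h1
  have h_lhs : HasDerivAt (fun s => 6 * deriv f s) (6 * f t) t := (hf'' t).const_mul 6
  have h_lhs' : HasDerivAt (fun s => 6 * deriv f s)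
      (C₁ * (Real.cos (θ t) * deriv θ t) - C₂ * (-Real.sin (θ t) * deriv θ t)) t :=
    h_rhs.congr_of_eventuallyEq hEq
  have huniq : 6 * f t
      = C₁ * (Real.cos (θ t) * deriv θ t) - C₂ * (-Real.sin (θ t) * deriv θ t) :=
    h_lhs.unique h_lhs'
  have e1 := h1 t ht
  have e2 := h2 t ht
  have pyth := Real.sin_sq_add_cos_sq (θ t)
  -- 6 f = θ' * (C₁ cos + C₂ sin) = θ' * (f θ')
  have hkey : 6 * f t = f t * (deriv θ t)^2 := by
    have h : 6 * f t = deriv θ t * (C₁ * Real.cos (θ t) + C₂ * Real.sin (θ t)) := by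
      rw [huniq]; ring
    rw [h, ← e2]; ring
  have sq1 : (6 * deriv f t)^2 = (C₁ * Real.sin (θ t) - C₂ * Real.cos (θ t))^2 := by rw [e1]
  have sq2 : (f t * deriv θ t)^2 = (C₁ * Real.cos (θ t) + C₂ * Real.sin (θ t))^2 := by rw [e2]
  linear_combination sq1 / 1 + sq2 + f t * hkey + (C₁^2 + C₂^2) * pyth

private lemma aux_not_singleton (I : Set ℝ) (hI_open : IsOpen I) (hI_ne : I.Nonempty)
    (h0 : ∀ t ∈ I, t = 0) : False := by
  obtain ⟨t₀, ht₀⟩ := hI_ne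
  obtain ⟨ε, hε, hball⟩ := Metric.isOpen_iff.mp hI_open t₀ ht₀
  have h1 : t₀ + ε / 2 ∈ I := by
    apply hball
    rw [Metric.mem_ball, Real.dist_eq]
    rw [show t₀ + ε / 2 - t₀ = ε / 2 by ring,
      abs_of_nonneg (by linarith : (0:ℝ) ≤ ε / 2)]
    linarith
  have h2 : t₀ - ε / 2 ∈ I := by
    apply hball
    rw [Metric.mem_ball, Real.dist_eq]
    rw [show t₀ - ε / 2 - t₀ = -(ε/2) by ring, abs_neg,
      abs_of_nonneg (by linarith : (0:ℝ) ≤ ε / 2)]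
    linarith
  have := h0 _ h1
  have := h0 _ h2
  linarith

/-- The analytic core of the proof of Proposition 4.6.  Let `I ⊆ ℝ` be a
nonempty open interval and let `f : I → ℝ` be one of the functions
`f(t) = cosh t`, `f(t) = e^t`, or `f(t) = sinh t` (with `I ⊆ (0,∞)` in the
last case).  Then there exist no continuously differentiable function
`θ : I → ℝ` and constants `C₁, C₂ ∈ ℝ` such that
`6f′(t) = C₁ sin θ(t) − C₂ cos θ(t)` and
`f(t)θ′(t) = C₁ cos θ(t) + C₂ sin θ(t)` for all `t ∈ I`. -/
theorem no_solution_of_warped_X₂X₃_einstein_system (I : Set ℝ)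
    (hI_open : IsOpen I) (hI_ne : I.Nonempty) (hI_conn : I.OrdConnected)
    (f : ℝ → ℝ)
    (hf : f = Real.cosh ∨ f = Real.exp ∨ (f = Real.sinh ∧ I ⊆ Set.Ioi 0)) :
    ¬ ∃ (θ : ℝ → ℝ) (C₁ C₂ : ℝ), ContDiffOn ℝ 1 θ I ∧
        (∀ t ∈ I, 6 * deriv f t = C₁ * Real.sin (θ t) - C₂ * Real.cos (θ t)) ∧
        (∀ t ∈ I, f t * deriv θ t = C₁ * Real.cos (θ t) + C₂ * Real.sin (θ t)) := by
  rintro ⟨θ, C₁, C₂, hθ, h1, h2⟩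
  rcases hf with hc | he | ⟨hs, hsub⟩
  · -- f = cosh
    subst hc
    have hf'' : ∀ t, HasDerivAt (deriv Real.cosh) (Real.cosh t) t := by
      intro t; rw [Real.deriv_cosh]; exact Real.hasDerivAt_sinh t
    have key := aux_key I hI_open Real.cosh hf'' θ C₁ C₂ hθ h1 h2
    have hK : ∀ t ∈ I, 36 * Real.sinh t ^ 2 + 6 * Real.cosh t ^ 2 = C₁^2 + C₂^2 := by
      intro t ht; have := key t ht; rwa [Real.deriv_cosh] at this
    refine aux_not_singleton I hI_open hI_ne ?_
    intro t ht
    have hmem : I ∈ nhds t := hI_open.mem_nhds ht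
    have hder : HasDerivAt (fun s => 36 * Real.sinh s ^ 2 + 6 * Real.cosh s ^ 2)
        (36 * (2 * Real.sinh t * Real.cosh t) + 6 * (2 * Real.cosh t * Real.sinh t)) t := by
      have hs := ((Real.hasDerivAt_sinh t).fun_pow 2).const_mul (36 : ℝ)
      have hc := ((Real.hasDerivAt_cosh t).fun_pow 2).const_mul (6 : ℝ)
      exact (hs.add hc).congr_deriv (by push_cast; ring)
    have hzero : HasDerivAt (fun s => 36 * Real.sinh s ^ 2 + 6 * Real.cosh s ^ 2) 0 t :=
      (hasDerivAt_const t (C₁^2 + C₂^2)).congr_of_eventuallyEq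
        (Filter.eventually_of_mem hmem (fun s hs => hK s hs))
    have h0 : 36 * (2 * Real.sinh t * Real.cosh t) + 6 * (2 * Real.cosh t * Real.sinh t) = 0 :=
      hder.unique hzero
    have hcp := Real.cosh_pos t
    have hsz : Real.sinh t = 0 := by nlinarith
    have : Real.sinh t = Real.sinh 0 := by rw [Real.sinh_zero]; exact hsz
    exact Real.sinh_injective this
  · -- f = exp
    subst he
    have hf'' : ∀ t, HasDerivAt (deriv Real.exp) (Real.exp t) t := by
      intro t; rw [Real.deriv_exp]; exact Real.hasDerivAt_exp t
    have key := aux_key I hI_open Real.exp hf'' θ C₁ C₂ hθ h1 h2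
    have hK : ∀ t ∈ I, 42 * Real.exp t ^ 2 = C₁^2 + C₂^2 := by
      intro t ht; have := key t ht; rw [Real.deriv_exp] at this; linarith
    obtain ⟨t₀, ht₀⟩ := hI_ne
    have hmem : I ∈ nhds t₀ := hI_open.mem_nhds ht₀
    have hder : HasDerivAt (fun s => 42 * Real.exp s ^ 2)
        (42 * (2 * Real.exp t₀ * Real.exp t₀)) t₀ := by
      have := ((Real.hasDerivAt_exp t₀).fun_pow 2).const_mul (42 : ℝ)
      exact this.congr_deriv (by push_cast; ring)
    have hzero : HasDerivAt (fun s => 42 * Real.exp s ^ 2) 0 t₀ :=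
      (hasDerivAt_const t₀ (C₁^2 + C₂^2)).congr_of_eventuallyEq
        (Filter.eventually_of_mem hmem (fun s hs => hK s hs))
    have h0 := hder.unique hzero
    have := Real.exp_pos t₀
    nlinarith
  · -- f = sinh
    subst hs
    have hf'' : ∀ t, HasDerivAt (deriv Real.sinh) (Real.sinh t) t := by
      intro t; rw [Real.deriv_sinh]; exact Real.hasDerivAt_cosh t
    have key := aux_key I hI_open Real.sinh hf'' θ C₁ C₂ hθ h1 h2
    have hK : ∀ t ∈ I, 36 * Real.cosh t ^ 2 + 6 * Real.sinh t ^ 2 = C₁^2 + C₂^2 := by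
      intro t ht; have := key t ht; rwa [Real.deriv_sinh] at this
    obtain ⟨t₀, ht₀⟩ := hI_ne
    have hmem : I ∈ nhds t₀ := hI_open.mem_nhds ht₀
    have hder : HasDerivAt (fun s => 36 * Real.cosh s ^ 2 + 6 * Real.sinh s ^ 2)
        (36 * (2 * Real.cosh t₀ * Real.sinh t₀) + 6 * (2 * Real.sinh t₀ * Real.cosh t₀)) t₀ := by
      have hc := ((Real.hasDerivAt_cosh t₀).fun_pow 2).const_mul (36 : ℝ)
      have hs := ((Real.hasDerivAt_sinh t₀).fun_pow 2).const_mul (6 : ℝ)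
      exact (hc.add hs).congr_deriv (by push_cast; ring)
    have hzero : HasDerivAt (fun s => 36 * Real.cosh s ^ 2 + 6 * Real.sinh s ^ 2) 0 t₀ :=
      (hasDerivAt_const t₀ (C₁^2 + C₂^2)).congr_of_eventuallyEq
        (Filter.eventually_of_mem hmem (fun s hs => hK s hs))
    have h0 := hder.unique hzero
    have hcp := Real.cosh_pos t₀
    have hsp : 0 < Real.sinh t₀ := Real.sinh_pos_iff.mpr (hsub ht₀)
    nlinarith
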